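/- Let $\Gamma = \mathbf{Z}$ act on itself by translation and let $G = \mu_3 \wr \mathbf{Z}$ act on $V = \mathbf{C}^{(\mathbf{Z})}$ by $e_i \mapsto \zeta_i e_{i+c}$. Then $V$ is an irreducible representation of $G$, but $V \otimes V$ has infinite length as a $G$-representation. -/
import Mathlib


/-- Translation by `c` on `V = ℂ^{(ℤ)}`: `e_i ↦ e_{i+c}`. -/
noncomputable def shiftV (c : ℤ) : (ℤ →₀ ℂ) ≃ₗ[ℂ] (ℤ →₀ ℂ) :=
  Finsupp.domLCongr (Equiv.addRight c)

/-- Diagonal scaling on `V`: `e_i ↦ ζ_i e_i`. -/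
noncomputable def diagV (ζ : ℤ → ℂ) : (ℤ →₀ ℂ) →ₗ[ℂ] (ℤ →₀ ℂ) :=
  Finsupp.lsum ℂ (fun i : ℤ => ζ i • Finsupp.lsingle i)

/-- Translation by `c` on `V ⊗ V`, modelled as `ℂ^{(ℤ × ℤ)}`: `e_{(i,j)} ↦ e_{(i+c,j+c)}`. -/
noncomputable def shiftVV (c : ℤ) : (ℤ × ℤ →₀ ℂ) ≃ₗ[ℂ] (ℤ × ℤ →₀ ℂ) :=
  Finsupp.domLCongr ((Equiv.addRight c).prodCongr (Equiv.addRight c))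

/-- Diagonal scaling on `V ⊗ V`: `e_{(i,j)} ↦ ζ_i ζ_j e_{(i,j)}`. -/
noncomputable def diagVV (ζ : ℤ → ℂ) : (ℤ × ℤ →₀ ℂ) →ₗ[ℂ] (ℤ × ℤ →₀ ℂ) :=
  Finsupp.lsum ℂ (fun p : ℤ × ℤ => (ζ p.1 * ζ p.2) • Finsupp.lsingle p)

lemma diagV_apply (ζ : ℤ → ℂ) (v : ℤ →₀ ℂ) (k : ℤ) : diagV ζ v k = ζ k * v k := by
  simp only [diagV, Finsupp.lsum_apply]
  rw [Finsupp.sum_apply]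
  simp only [LinearMap.smul_apply, Finsupp.lsingle_apply, Finsupp.smul_apply,
    Finsupp.single_apply, smul_eq_mul, mul_ite, mul_zero]
  rw [Finsupp.sum_ite_eq' v k (fun i a => ζ i * a)]
  split
  · rfl
  · rw [Finsupp.notMem_support_iff.mp ‹_›, mul_zero]

lemma diagVV_apply (ζ : ℤ → ℂ) (v : ℤ × ℤ →₀ ℂ) (k : ℤ × ℤ) :
    diagVV ζ v k = ζ k.1 * ζ k.2 * v k := by
  simp only [diagVV, Finsupp.lsum_apply]
  rw [Finsupp.sum_apply]
  simp only [LinearMap.smul_apply, Finsupp.lsingle_apply, Finsupp.smul_apply,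
    Finsupp.single_apply, smul_eq_mul, mul_ite, mul_zero]
  rw [Finsupp.sum_ite_eq' v k (fun i a => ζ i.1 * ζ i.2 * a)]
  split
  · rfl
  · rw [Finsupp.notMem_support_iff.mp ‹_›, mul_zero]

lemma shiftV_single (c i : ℤ) (a : ℂ) :
    shiftV c (Finsupp.single i a) = Finsupp.single (i + c) a := by
  rw [shiftV, Finsupp.domLCongr_single]; rfl

lemma shiftVV_apply (c : ℤ) (v : ℤ × ℤ →₀ ℂ) (q : ℤ × ℤ) :
    shiftVV c v q = v (q.1 - c, q.2 - c) := by
  simp only [shiftVV, Finsupp.domLCongr_apply, Finsupp.equivMapDomain_apply,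
    Equiv.prodCongr_symm, Equiv.prodCongr_apply, Equiv.symm_symm, Equiv.coe_addRight,
    Equiv.addRight_symm, sub_eq_add_neg]
  rfl

/-- the standard primitive cube root of unity -/
noncomputable def ω : ℂ := Complex.exp (2 * Real.pi * Complex.I / 3)

lemma ω_prim : IsPrimitiveRoot ω 3 := Complex.isPrimitiveRoot_exp 3 (by norm_num)

lemma ω_cube : ω ^ 3 = 1 := ω_prim.pow_eq_one

lemma ω_sum : 1 + ω + ω ^ 2 = 0 := by
  have hne : ω - 1 ≠ 0 := sub_ne_zero.mpr (ω_prim.ne_one (by norm_num))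
  have h : (ω - 1) * (1 + ω + ω ^ 2) = 0 := by
    have := ω_cube
    ring_nf
    linear_combination this
  rcases mul_eq_zero.mp h with h' | h'
  · exact absurd h' hne
  · exact h'

/-- Key step: an invariant nonzero vector produces a basis vector in W. -/
lemma key (W : Submodule ℂ (ℤ →₀ ℂ))
    (hdiag : ∀ ζ : ℤ → ℂ, (∀ i, ζ i ^ 3 = 1) → ∀ v ∈ W, diagV ζ v ∈ W) :
    ∀ n : ℕ, ∀ v : ℤ →₀ ℂ, v.support.card ≤ n → v ≠ 0 → v ∈ W →
      ∃ i : ℤ, Finsupp.single i (1 : ℂ) ∈ W := by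
  intro n
  induction n with
  | zero =>
    intro v hc hv _
    exact absurd (Finsupp.support_eq_empty.mp (Finset.card_eq_zero.mp (Nat.le_zero.mp hc))) hv
  | succ n ih =>
    intro v hc hv hvW
    by_cases h1 : v.support.card ≤ n
    · exact ih v h1 hv hvW
    push_neg at h1
    by_cases hcard : v.support.card = 1
    · obtain ⟨i, b, hb, hv'⟩ := Finsupp.card_support_eq_one'.mp hcard
      refine ⟨i, ?_⟩
      have : Finsupp.single i (1 : ℂ) = b⁻¹ • v := by
        rw [hv', Finsupp.smul_single, smul_eq_mul, inv_mul_cancel₀ hb]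
      rw [this]
      exact W.smul_mem _ hvW
    · -- support has at least two elements
      have h2 : 1 < v.support.card := lt_of_le_of_ne (Nat.one_le_iff_ne_zero.mpr
        (fun h => hv (Finsupp.support_eq_empty.mp (Finset.card_eq_zero.mp h)))) (Ne.symm hcard)
      obtain ⟨i₀, hi₀, j, hj, hij⟩ := Finset.one_lt_card.mp h2
      set ζ : ℤ → ℂ := fun k => if k = j then ω else 1 with hζ
      have hζ3 : ∀ i, ζ i ^ 3 = 1 := by
        intro i; simp only [hζ]; split
        · exact ω_cube
        · exact one_pow 3
      have hζ23 : ∀ i, (fun k => (ζ k) ^ 2) i ^ 3 = 1 := by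
        intro i; simp only; rw [← pow_mul, mul_comm, pow_mul, hζ3, one_pow]
      set w : ℤ →₀ ℂ := v + diagV ζ v + diagV (fun k => (ζ k) ^ 2) v with hw
      have hwW : w ∈ W := W.add_mem (W.add_mem hvW (hdiag ζ hζ3 v hvW))
        (hdiag _ hζ23 v hvW)
      have hwk : ∀ k, w k = (1 + ζ k + ζ k ^ 2) * v k := by
        intro k
        simp only [hw, Finsupp.add_apply, diagV_apply]
        ring
      have hwj : w j = 0 := by
        rw [hwk]; simp only [hζ, if_pos rfl, ω_sum, zero_mul]
      have hwk' : ∀ k, k ≠ j → w k = 3 * v k := by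
        intro k hk
        rw [hwk]; simp only [hζ, if_neg hk]; ring_nf
      have hwi₀ : w i₀ ≠ 0 := by
        rw [hwk' i₀ hij]
        exact mul_ne_zero (by norm_num) (Finsupp.mem_support_iff.mp hi₀)
      have hwne : w ≠ 0 := fun h => hwi₀ (by rw [h]; rfl)
      have hsub : w.support ⊆ v.support.erase j := by
        intro k hk
        rw [Finsupp.mem_support_iff] at hk
        have hkj : k ≠ j := fun h => hk (h ▸ hwj)
        refine Finset.mem_erase.mpr ⟨hkj, Finsupp.mem_support_iff.mpr ?_⟩
        intro hvk
        exact hk (by rw [hwk' k hkj, hvk, mul_zero])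
      have hcard' : w.support.card ≤ n := by
        calc w.support.card ≤ (v.support.erase j).card := Finset.card_le_card hsub
          _ = v.support.card - 1 := Finset.card_erase_of_mem hj
          _ ≤ (n + 1) - 1 := Nat.sub_le_sub_right hc 1
          _ = n := rfl
      exact ih w hcard' hwne hwW

/-- The chain of subrepresentations of `V ⊗ V`. -/
noncomputable def Wfam (j : ℕ) : Submodule ℂ (ℤ × ℤ →₀ ℂ) :=
  Finsupp.supported ℂ ℂ {p : ℤ × ℤ | p.2 - p.1 ∈ Set.Icc 0 (j : ℤ)}

theorem stmt14 :
    (∀ W : Submodule ℂ (ℤ →₀ ℂ),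
      (∀ c : ℤ, ∀ v ∈ W, shiftV c v ∈ W) →
      (∀ ζ : ℤ → ℂ, (∀ i, ζ i ^ 3 = 1) → ∀ v ∈ W, diagV ζ v ∈ W) →
      W = ⊥ ∨ W = ⊤) ∧
    (∀ n : ℕ, ∃ W : Fin (n + 1) → Submodule ℂ (ℤ × ℤ →₀ ℂ),
      StrictMono W ∧ ∀ j,
        (∀ c : ℤ, ∀ v ∈ W j, shiftVV c v ∈ W j) ∧
        (∀ ζ : ℤ → ℂ, (∀ i, ζ i ^ 3 = 1) → ∀ v ∈ W j, diagVV ζ v ∈ W j)) := by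
  constructor
  · -- irreducibility
    intro W hshift hdiag
    by_cases hbot : W = ⊥
    · exact Or.inl hbot
    right
    obtain ⟨v, hvW, hv⟩ := Submodule.exists_mem_ne_zero_of_ne_bot hbot
    obtain ⟨i, hi⟩ := key W hdiag v.support.card v le_rfl hv hvW
    -- all basis vectors lie in W
    have hall : ∀ m : ℤ, Finsupp.single m (1 : ℂ) ∈ W := by
      intro m
      have := hshift (m - i) _ hi
      rwa [shiftV_single, add_sub_cancel] at this
    rw [eq_top_iff]
    intro u _
    have : u = u.sum fun m a => a • Finsupp.single m (1 : ℂ) := by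
      conv_lhs => rw [← Finsupp.sum_single u]
      exact Finsupp.sum_congr fun m _ => by rw [Finsupp.smul_single, smul_eq_mul, mul_one]
    rw [this]
    exact Submodule.sum_mem W fun m _ => W.smul_mem _ (hall m)
  · -- infinite length of V ⊗ V
    intro n
    refine ⟨fun j => Wfam j, ?_, ?_⟩
    · intro a b hab
      show Wfam a < Wfam b
      refine lt_of_le_of_ne ?_ ?_
      · unfold Wfam
        apply Finsupp.supported_mono
        intro p hp
        simp only [Set.mem_setOf_eq, Set.mem_Icc] at *
        have hab' : (a : ℕ) < (b : ℕ) := hab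
        exact ⟨hp.1, hp.2.trans (by exact_mod_cast hab'.le)⟩
      · intro heq
        have hmem : Finsupp.single ((0 : ℤ), (b : ℤ)) (1 : ℂ) ∈ Wfam b := by
          unfold Wfam
          rw [Finsupp.mem_supported, Finsupp.support_single_ne_zero _ one_ne_zero]
          simp
        rw [← heq] at hmem
        unfold Wfam at hmem
        rw [Finsupp.mem_supported, Finsupp.support_single_ne_zero _ one_ne_zero] at hmem
        have h2 := hmem (Finset.mem_coe.mpr (Finset.mem_singleton_self _))
        simp only [Set.mem_setOf_eq, Set.mem_Icc, sub_zero] at h2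
        have hba : (b : ℤ) ≤ (a : ℤ) := h2.2
        have hab' : (a : ℕ) < (b : ℕ) := hab
        omega
    · intro j
      constructor
      · intro c v hvmem
        simp only [Wfam, Finsupp.mem_supported'] at hvmem ⊢
        intro q hq
        rw [shiftVV_apply]
        apply hvmem
        simp only [Set.mem_setOf_eq, Set.mem_Icc] at hq ⊢
        intro h
        apply hq
        constructor <;> omega
      · intro ζ _ v hvmem
        simp only [Wfam, Finsupp.mem_supported'] at hvmem ⊢
        intro q hq
        rw [diagVV_apply, hvmem q hq, mul_zero]
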